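/- If a is regular modulo m, then for all positive integers k, l: a^k ≡ a^l (mod m) if and only if k ≡ l (mod |a|_m). -/
import Mathlib

/-- `e` is an idempotent residue modulo `m`: `e^2 ≡ e (mod m)`. -/
def Idem (m : ℕ) (e : ZMod m) : Prop := e ^ 2 = e

/-- The order `|a|_m`: the least `n ≥ 1` such that `a^n` is idempotent mod `m`. -/
noncomputable def ord (m : ℕ) (a : ZMod m) : ℕ := sInf {n | 1 ≤ n ∧ Idem m (a ^ n)}

/-- `a` is regular modulo `m`: `a^(|a|_m + 1) ≡ a (mod m)`. -/
noncomputable def Reg (m : ℕ) (a : ZMod m) : Prop := a ^ (ord m a + 1) = a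

/-- `R_m^e`: the regular residues mod `m` whose idempotent power is `e`. -/
noncomputable def Rme (m : ℕ) (e : ZMod m) : Set (ZMod m) :=
  {a | Reg m a ∧ a ^ (ord m a) = e}

/-- The orbit of `a` modulo `m`: `{a^j mod m : 1 ≤ j ≤ |a|_m}`. -/
noncomputable def orb (m : ℕ) (a : ZMod m) : Finset (ZMod m) :=
  (Finset.Icc 1 (ord m a)).image (a ^ ·)

lemma exists_idem_pow (m : ℕ) (hm : 1 ≤ m) (a : ZMod m) :
    ∃ n, 1 ≤ n ∧ Idem m (a ^ n) := by
  haveI : NeZero m := ⟨by omega⟩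
  obtain ⟨i, j, hij, h⟩ := Finite.exists_ne_map_eq_of_infinite (fun n : ℕ => a ^ (n + 1))
  wlog hlt : i < j generalizing i j
  · exact this j i hij.symm h.symm (by omega)
  have hp : 1 ≤ j - i := by omega
  have hsp : a ^ (i + 1 + (j - i)) = a ^ (i + 1) := by
    have hji : i + 1 + (j - i) = j + 1 := by omega
    rw [hji]; exact h.symm
  have key : ∀ t n, i + 1 ≤ n → a ^ (n + t * (j - i)) = a ^ n := by
    intro t
    induction t with
    | zero => simp
    | succ t ih =>
      intro n hn
      have h1 : a ^ (n + (j - i)) = a ^ n := by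
        obtain ⟨c, rfl⟩ := Nat.exists_eq_add_of_le hn
        have e1 : i + 1 + c + (j - i) = (i + 1 + (j - i)) + c := by omega
        rw [e1, pow_add, hsp, ← pow_add]
      have e2 : n + (t + 1) * (j - i) = (n + (j - i)) + t * (j - i) := by ring
      rw [e2, ih _ (by omega), h1]
  refine ⟨(i + 1) * (j - i), Nat.mul_pos (by omega) hp, ?_⟩
  unfold Idem
  rw [← pow_mul]
  have e3 : (i + 1) * (j - i) * 2 = (i + 1) * (j - i) + (i + 1) * (j - i) := by ring
  rw [e3]
  exact key (i + 1) _ (Nat.le_mul_of_pos_right _ (by omega))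

/-- If `a` is regular mod `m`, then `a^k ≡ a^l (mod m)` iff `k ≡ l (mod |a|_m)`. -/
theorem pow_eq_pow_iff_modEq_ord (m : ℕ) (hm : 1 ≤ m) (a : ZMod m) (ha : Reg m a)
    (k l : ℕ) (hk : 1 ≤ k) (hl : 1 ≤ l) :
    a ^ k = a ^ l ↔ k ≡ l [MOD ord m a] := by
  set d := ord m a with hd
  have hd1 : 1 ≤ d := (Nat.sInf_mem (exists_idem_pow m hm a)).1
  have hidem : Idem m (a ^ d) := (Nat.sInf_mem (exists_idem_pow m hm a)).2
  have hle' : ∀ n, 1 ≤ n → Idem m (a ^ n) → d ≤ n := fun n h1 h2 =>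
    Nat.sInf_le ⟨h1, h2⟩
  have hper : ∀ n, 1 ≤ n → a ^ (n + d) = a ^ n := by
    intro n hn
    obtain ⟨c, rfl⟩ := Nat.exists_eq_add_of_le hn
    have e1 : 1 + c + d = (d + 1) + c := by omega
    rw [e1, pow_add, ha, pow_add, pow_one]
  have hperT : ∀ t n, 1 ≤ n → a ^ (n + t * d) = a ^ n := by
    intro t
    induction t with
    | zero => simp
    | succ t ih =>
      intro n hn
      have e2 : n + (t + 1) * d = (n + d) + t * d := by ring
      rw [e2, ih _ (by omega), hper n hn]
  have he : ∀ c, 1 ≤ c → a ^ (c * d) = a ^ d := by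
    intro c hc
    obtain ⟨c', rfl⟩ := Nat.exists_eq_add_of_le hc
    have e3 : (1 + c') * d = d + c' * d := by ring
    rw [e3, hperT c' d hd1]
  have hdvd : ∀ n, 1 ≤ n → a ^ n = a ^ d → d ∣ n := by
    intro n hn hnd
    by_contra hnd'
    have h1 : 1 ≤ n % d := by
      rcases Nat.eq_zero_or_pos (n % d) with h | h
      · exact absurd (Nat.dvd_of_mod_eq_zero h) hnd'
      · exact h
    have hmod : a ^ (n % d) = a ^ d := by
      have := hperT (n / d) (n % d) h1
      rw [Nat.mod_add_div'] at this
      rw [← this, hnd]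
    have := hle' (n % d) h1 (by unfold Idem; rw [hmod]; exact hidem)
    have hlt := Nat.mod_lt n (show 0 < d by omega)
    omega
  have fwd : ∀ k l, 1 ≤ k → k ≤ l → a ^ k = a ^ l → k ≡ l [MOD d] := by
    intro k l hk hkl heq
    rcases Nat.eq_or_lt_of_le hkl with rfl | hlt
    · rfl
    · have hu : 1 ≤ l - k := by omega
      obtain ⟨d', hdd⟩ : ∃ d', d = d' + 1 := ⟨d - 1, by omega⟩
      have h1 : a ^ (k * d) = a ^ ((l - k) + k * d) := by
        calc a ^ (k * d) = a ^ k * a ^ (k * d') := by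
              rw [← pow_add]; congr 1; rw [hdd]; ring
          _ = a ^ l * a ^ (k * d') := by rw [heq]
          _ = a ^ ((l - k) + k * d) := by
              rw [← pow_add]; congr 1; rw [hdd]
              have : k * (d' + 1) = k * d' + k := by ring
              omega
      rw [hperT k (l - k) hu] at h1
      have hukey : a ^ (l - k) = a ^ d := by rw [← h1, he k hk]
      exact (Nat.modEq_iff_dvd' hkl).mpr (hdvd (l - k) hu hukey)
  have bwd : ∀ k l, 1 ≤ k → k ≤ l → k ≡ l [MOD d] → a ^ k = a ^ l := by
    intro k l hk hkl hmeq
    obtain ⟨t, ht⟩ := (Nat.modEq_iff_dvd' hkl).mp hmeq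
    have hle2 : l = k + d * t := by omega
    rw [hle2, mul_comm d t, hperT t k hk]
  constructor
  · intro h
    rcases le_total k l with hle | hle
    · exact fwd k l hk hle h
    · exact (fwd l k hl hle h.symm).symm
  · intro h
    rcases le_total k l with hle | hle
    · exact bwd k l hk hle h
    · exact (bwd l k hl hle h.symm).symm
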